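/- arXiv:2505.24568 — 2 statements merged into one kernel-verified Lean document; each statement's English description precedes it below -/
import Mathlib

section
/- Let a > 0 and R ≥ 1. For every x with |x| < 1/1000 and every complex number z with |z| = c > 0, the integral ∫_R^{R+1} e^{ixξ} z |ξ|^a dξ has modulus at least (c R^a)/2. In particular, with z = i t₀ - t₀^γ where t₀ satisfies t₀² + t₀^{2γ} = R^{-2a}/10⁴, one has |∫_R^{R+1} e^{ixξ}(i t₀ |ξ|^a - t₀^γ |ξ|^a) dξ| ≥ 1/200. -/
open MeasureTheory intervalIntegral

lemma osc_cont (a x R : ℝ) (hR : 1 ≤ R) :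
    ContinuousOn (fun ξ : ℝ => Complex.exp (Complex.I * (x : ℂ) * (ξ : ℂ)) * ((|ξ| ^ a : ℝ) : ℂ))
      (Set.uIcc R (R + 1)) := by
  apply ContinuousOn.mul
  · exact (Complex.continuous_exp.comp (by continuity)).continuousOn
  · apply Continuous.comp_continuousOn Complex.continuous_ofReal
    intro ξ hξ
    rw [Set.uIcc_of_le (by linarith)] at hξ
    have hξ1 : (1:ℝ) ≤ ξ := le_trans hR hξ.1
    exact ((Real.continuousAt_rpow_const |ξ| a (Or.inl (by positivity))).comp
      continuous_abs.continuousAt).continuousWithinAt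

lemma key_bound (a x R : ℝ) (ha : 0 < a) (hR : 1 ≤ R) (hx : |x| < 1 / 1000) :
    R ^ a / 2 ≤ ‖∫ ξ in R..(R + 1),
        Complex.exp (Complex.I * (x : ℂ) * (ξ : ℂ)) * ((|ξ| ^ a : ℝ) : ℂ)‖ := by
  have hR0 : (0:ℝ) < R := lt_of_lt_of_le one_pos hR
  set f : ℝ → ℂ := fun ξ => Complex.exp (Complex.I * (x : ℂ) * (ξ : ℂ)) * ((|ξ| ^ a : ℝ) : ℂ)
    with hf
  have hfint : IntervalIntegrable f volume R (R + 1) :=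
    (osc_cont a x R hR).intervalIntegrable
  have hgint : IntervalIntegrable (fun ξ => Complex.exp (-(Complex.I * x * R)) * f ξ)
      volume R (R + 1) := hfint.const_mul _
  -- the rotated integral
  have hnorm : ‖∫ ξ in R..(R+1), f ξ‖
      = ‖∫ ξ in R..(R+1), Complex.exp (-(Complex.I * x * R)) * f ξ‖ := by
    rw [intervalIntegral.integral_const_mul, norm_mul,
      Complex.norm_exp]
    simp
  rw [hnorm]
  have hre : (∫ ξ in R..(R+1), Complex.exp (-(Complex.I * x * R)) * f ξ).re
      = ∫ ξ in R..(R+1), Real.cos (x * (ξ - R)) * |ξ| ^ a := by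
    rw [intervalIntegral.integral_of_le (by linarith), intervalIntegral.integral_of_le (by linarith),
      ← RCLike.re_to_complex, ← integral_re]
    · apply MeasureTheory.integral_congr_ae
      filter_upwards with ξ
      have h1 : Complex.exp (-(Complex.I * x * R)) * f ξ
          = Complex.exp (((x * (ξ - R) : ℝ) : ℂ) * Complex.I) * ((|ξ| ^ a : ℝ) : ℂ) := by
        show Complex.exp (-(Complex.I * (x:ℂ) * (R:ℂ))) *
            (Complex.exp (Complex.I * (x:ℂ) * (ξ:ℂ)) * ((|ξ| ^ a : ℝ) : ℂ)) = _
        rw [← mul_assoc, ← Complex.exp_add]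
        congr 2
        push_cast
        ring
      rw [h1, RCLike.re_to_complex, Complex.mul_re, Complex.exp_ofReal_mul_I_re, Complex.ofReal_re,
        Complex.ofReal_im, mul_zero, sub_zero]
    · exact (hgint.1).mono_set (by simp [Set.Ioc_subset_Icc_self.trans (Set.Icc_subset_uIcc)])
  have hlower : R ^ a / 2 ≤ ∫ ξ in R..(R+1), Real.cos (x * (ξ - R)) * |ξ| ^ a := by
    have h1 : (R ^ a / 2) = ∫ _ξ in R..(R+1), (R ^ a / 2 : ℝ) := by simp
    rw [h1]
    apply intervalIntegral.integral_mono_on (by linarith) (by simp)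
    · have : ContinuousOn (fun ξ : ℝ => Real.cos (x * (ξ - R)) * |ξ| ^ a) (Set.uIcc R (R+1)) := by
        apply ContinuousOn.mul (by fun_prop)
        intro ξ hξ
        rw [Set.uIcc_of_le (by linarith)] at hξ
        have hξ1 : (1:ℝ) ≤ ξ := le_trans hR hξ.1
        exact ((Real.continuousAt_rpow_const |ξ| a (Or.inl (by positivity))).comp
          continuous_abs.continuousAt).continuousWithinAt
      exact this.intervalIntegrable
    · intro ξ hξ
      have hξ1 : (1:ℝ) ≤ ξ := le_trans hR hξ.1
      have habs : |ξ| = ξ := abs_of_pos (by linarith)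
      have hr : R ^ a ≤ |ξ| ^ a := by
        rw [habs]; exact Real.rpow_le_rpow hR0.le hξ.1 ha.le
      have hRa : (0:ℝ) < R ^ a := Real.rpow_pos_of_pos hR0 a
      have hcos : (1:ℝ)/2 ≤ Real.cos (x * (ξ - R)) := by
        have h2 : |x * (ξ - R)| ≤ 1/1000 := by
          rw [abs_mul]
          have : |ξ - R| ≤ 1 := by
            rw [abs_of_nonneg (by linarith [hξ.1])]; linarith [hξ.2]
          nlinarith [abs_nonneg x, abs_nonneg (ξ - R)]
        have := Real.one_sub_sq_div_two_le_cos (x := x * (ξ - R))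
        nlinarith [sq_abs (x * (ξ - R)), abs_nonneg (x * (ξ - R))]
      calc R ^ a / 2 = (1/2) * R ^ a := by ring
        _ ≤ Real.cos (x * (ξ - R)) * |ξ| ^ a :=
          mul_le_mul hcos hr hRa.le (by linarith)
  calc R ^ a / 2 ≤ (∫ ξ in R..(R+1), Complex.exp (-(Complex.I * x * R)) * f ξ).re := by
        rw [hre]; exact hlower
    _ ≤ ‖∫ ξ in R..(R+1), Complex.exp (-(Complex.I * x * R)) * f ξ‖ :=
        Complex.re_le_norm _

/-- For `a > 0`, `R ≥ 1`, `|x| < 1/1000`, and any complex `z` with `|z| = c > 0`,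
`|∫_R^{R+1} e^{ixξ} z |ξ|^a dξ| ≥ c R^a / 2`; in particular, with
`z = i t₀ - t₀^γ` where `t₀² + t₀^{2γ} = R^{-2a}/10⁴`, the integral has
modulus at least `1/200`. -/
theorem oscillatory_integral_lower_bound (a γ x R : ℝ) (ha : 0 < a) (hγ : 0 < γ)
    (hR : 1 ≤ R) (hx : |x| < 1 / 1000) :
    (∀ c : ℝ, 0 < c → ∀ z : ℂ, ‖z‖ = c →
        c * R ^ a / 2 ≤
          ‖∫ ξ in R..(R + 1),
              Complex.exp (Complex.I * (x : ℂ) * (ξ : ℂ)) * z * ((|ξ| ^ a : ℝ) : ℂ)‖) ∧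
      ∀ t₀ : ℝ, 0 < t₀ → t₀ ^ 2 + t₀ ^ (2 * γ) = R ^ (-(2 * a)) / 10 ^ 4 →
        (1 : ℝ) / 200 ≤
          ‖∫ ξ in R..(R + 1),
              Complex.exp (Complex.I * (x : ℂ) * (ξ : ℂ)) *
                (Complex.I * (t₀ : ℂ) * ((|ξ| ^ a : ℝ) : ℂ) -
                  ((t₀ ^ γ : ℝ) : ℂ) * ((|ξ| ^ a : ℝ) : ℂ))‖ := by
  have hR0 : (0:ℝ) < R := lt_of_lt_of_le one_pos hR
  have main : ∀ c : ℝ, 0 < c → ∀ z : ℂ, ‖z‖ = c →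
      c * R ^ a / 2 ≤
        ‖∫ ξ in R..(R + 1),
            Complex.exp (Complex.I * (x : ℂ) * (ξ : ℂ)) * z * ((|ξ| ^ a : ℝ) : ℂ)‖ := by
    intro c hc z hz
    have heq : (∫ ξ in R..(R + 1),
        Complex.exp (Complex.I * (x : ℂ) * (ξ : ℂ)) * z * ((|ξ| ^ a : ℝ) : ℂ))
        = (∫ ξ in R..(R + 1),
        Complex.exp (Complex.I * (x : ℂ) * (ξ : ℂ)) * ((|ξ| ^ a : ℝ) : ℂ)) * z := by
      rw [← intervalIntegral.integral_mul_const]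
      congr 1; funext ξ; ring
    rw [heq, norm_mul, hz]
    calc c * R ^ a / 2 = (R ^ a / 2) * c := by ring
      _ ≤ _ := mul_le_mul_of_nonneg_right (key_bound a x R ha hR hx) hc.le
  refine ⟨main, ?_⟩
  intro t₀ ht₀ hsum
  set z : ℂ := Complex.I * (t₀ : ℂ) - ((t₀ ^ γ : ℝ) : ℂ) with hzdef
  have hnormsq : Complex.normSq z = t₀ ^ 2 + t₀ ^ (2 * γ) := by
    have h2 : t₀ ^ (2 * γ) = t₀ ^ γ * t₀ ^ γ := by
      rw [two_mul, Real.rpow_add ht₀]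
    simp [hzdef, Complex.normSq_apply, h2]
    ring
  have hc : ‖z‖ = R ^ (-a) / 100 := by
    rw [Complex.norm_def, hnormsq, hsum]
    have h2 : R ^ (-(2 * a)) = R ^ (-a) * R ^ (-a) := by
      rw [← Real.rpow_add hR0]; ring_nf
    have : R ^ (-(2 * a)) / 10 ^ 4 = (R ^ (-a) / 100) ^ 2 := by
      rw [h2]; ring
    rw [this, Real.sqrt_sq (by positivity)]
  have hcpos : (0:ℝ) < R ^ (-a) / 100 := by positivity
  have := main _ hcpos z hc
  have hval : R ^ (-a) / 100 * R ^ a / 2 = 1 / 200 := by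
    have h1 : R ^ (-a) * R ^ a = 1 := by
      rw [← Real.rpow_add hR0]; norm_num
    linear_combination h1 / 200
  rw [hval] at this
  refine le_trans this (le_of_eq ?_)
  congr 1
  apply intervalIntegral.integral_congr
  intro ξ _
  rw [hzdef]
  ring
end

section
/- Let γ > 0 and a > 0, and let f be a Schwartz function on ℝ such that for almost every x ∈ ℝ, lim_{t→0⁺} t^{-min{1,γ}} (P_{a,γ}^t f(x) - f(x)) = 0, where P_{a,γ}^t f(x) = (1/2π) ∫_ℝ f̂(ξ) e^{ixξ} e^{it|ξ|^a} e^{-t^γ|ξ|^a} dξ. Then f ≡ 0. -/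
open MeasureTheory Filter

/-- The Fourier transform `f̂(ξ) = ∫ f(y) e^{-iξy} dy`. -/
noncomputable def fhat (f : ℝ → ℂ) (ξ : ℝ) : ℂ :=
  ∫ y : ℝ, f y * Complex.exp (-(Complex.I * (ξ : ℂ) * (y : ℂ)))

/-- The Landau type Schrödinger operator
`P_{a,γ}^t f(x) = (1/2π) ∫ f̂(ξ) e^{ixξ} e^{it|ξ|^a} e^{-t^γ|ξ|^a} dξ`. -/
noncomputable def landau (a γ : ℝ) (f : ℝ → ℂ) (t x : ℝ) : ℂ :=
  (1 / (2 * Real.pi)) *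
    ∫ ξ : ℝ, fhat f ξ * Complex.exp (Complex.I * (x : ℂ) * (ξ : ℂ)) *
      Complex.exp (Complex.I * ((t * |ξ| ^ a : ℝ) : ℂ)) *
      Complex.exp (-((t ^ γ * |ξ| ^ a : ℝ) : ℂ))

open Complex FourierTransform

private lemma norm_exp_sub_one_le_of_re_nonpos {z : ℂ} (hz : z.re ≤ 0) :
    ‖Complex.exp z - 1‖ ≤ ‖z‖ := by
  have hf : ∀ s ∈ Set.Icc (0:ℝ) 1, HasDerivWithinAt (fun s : ℝ => Complex.exp ((s:ℂ) * z))
      (Complex.exp ((s:ℂ) * z) * z) (Set.Icc (0:ℝ) 1) s := by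
    intro s _
    have h1 : HasDerivAt (fun s : ℝ => (s:ℂ) * z) z s := by
      simpa using (Complex.ofRealCLM.hasDerivAt (x := s)).mul_const z
    simpa using (h1.cexp).hasDerivWithinAt
  have bound : ∀ s ∈ Set.Ico (0:ℝ) 1, ‖Complex.exp ((s:ℂ) * z) * z‖ ≤ ‖z‖ := by
    intro s hs
    rw [norm_mul]
    have h2 : ‖Complex.exp ((s:ℂ) * z)‖ ≤ 1 := by
      rw [Complex.norm_exp, Real.exp_le_one_iff]
      have : ((s:ℂ) * z).re = s * z.re := by simp
      rw [this]
      exact mul_nonpos_of_nonneg_of_nonpos hs.1 hz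
    calc ‖Complex.exp ((s:ℂ) * z)‖ * ‖z‖ ≤ 1 * ‖z‖ :=
          mul_le_mul_of_nonneg_right h2 (norm_nonneg z)
      _ = ‖z‖ := one_mul _
  have := norm_image_sub_le_of_norm_deriv_le_segment_01' hf bound
  simpa using this
private lemma fhat_eq (f : ℝ → ℂ) (ξ : ℝ) :
    fhat f ξ = 𝓕 f (ξ / (2 * Real.pi)) := by
  rw [Real.fourier_real_eq_integral_exp_smul, fhat]
  congr 1
  ext v
  rw [smul_eq_mul]
  rw [mul_comm]
  congr 1
  congr 1
  have hπ : (Real.pi : ℝ) ≠ 0 := Real.pi_ne_zero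
  have : -2 * Real.pi * v * (ξ / (2 * Real.pi)) = -(ξ * v) := by field_simp
  rw [this]
  push_cast
  ring

private lemma integrable_rpow_norm (F : SchwartzMap ℝ ℂ) {a : ℝ} (ha : 0 < a) :
    Integrable (fun ξ : ℝ => |ξ| ^ a * ‖F ξ‖) := by
  set k := ⌈a⌉₊ with hk
  have h1 : Integrable (fun ξ : ℝ => ‖F ξ‖ + ‖ξ‖ ^ k * ‖F ξ‖) :=
    F.integrable.norm.add (F.integrable_pow_mul volume k)
  refine h1.mono ?_ ?_
  · exact (((Real.continuous_rpow_const ha.le).comp _root_.continuous_abs).mul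
      F.continuous.norm).aestronglyMeasurable
  · filter_upwards with ξ
    have h0 : (0:ℝ) ≤ |ξ| ^ a * ‖F ξ‖ :=
      mul_nonneg (Real.rpow_nonneg (abs_nonneg ξ) a) (norm_nonneg _)
    rw [Real.norm_of_nonneg h0]
    rcases le_or_gt (|ξ|) 1 with hle | hgt
    · have : |ξ| ^ a ≤ 1 := Real.rpow_le_one (abs_nonneg ξ) hle ha.le
      have := mul_le_mul_of_nonneg_right this (norm_nonneg (F ξ))
      rw [one_mul] at this
      refine this.trans ?_
      have : (0:ℝ) ≤ ‖ξ‖ ^ k * ‖F ξ‖ := by positivity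
      have hb : ‖F ξ‖ ≤ ‖F ξ‖ + ‖ξ‖ ^ k * ‖F ξ‖ := le_add_of_nonneg_right this
      exact hb.trans (le_abs_self _)
    · have h2 : |ξ| ^ a ≤ |ξ| ^ (k:ℝ) :=
        Real.rpow_le_rpow_of_exponent_le hgt.le (Nat.le_ceil a)
      rw [Real.rpow_natCast] at h2
      have h3 : |ξ| ^ a * ‖F ξ‖ ≤ |ξ| ^ k * ‖F ξ‖ :=
        mul_le_mul_of_nonneg_right h2 (norm_nonneg _)
      refine h3.trans ?_
      have : |ξ| ^ k * ‖F ξ‖ ≤ ‖F ξ‖ + ‖ξ‖ ^ k * ‖F ξ‖ := by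
        rw [Real.norm_eq_abs]
        exact le_add_of_nonneg_left (norm_nonneg _)
      exact this.trans (le_abs_self _)

private lemma tendsto_rpow_zero_right {e : ℝ} (he : 0 ≤ e) :
    Tendsto (fun t : ℝ => t ^ e) (nhdsWithin 0 (Set.Ioi 0))
      (nhds (if e = 0 then 1 else 0)) := by
  rcases eq_or_lt_of_le he with he0 | he0
  · simp only [← he0, Real.rpow_zero, if_pos rfl]
    exact tendsto_const_nhds
  · rw [if_neg he0.ne']
    have := ((Real.continuous_rpow_const he).tendsto 0).mono_left
      (nhdsWithin_le_nhds (s := Set.Ioi (0:ℝ)))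
    simpa [Real.zero_rpow he0.ne'] using this

private lemma exp_ratio_tendsto :
    Tendsto (fun w : ℂ => (Complex.exp w - 1) / w) (nhdsWithin 0 {(0:ℂ)}ᶜ) (nhds 1) := by
  have hd : HasDerivAt Complex.exp 1 0 := by simpa using Complex.hasDerivAt_exp 0
  rw [hasDerivAt_iff_tendsto_slope] at hd
  refine hd.congr' ?_
  filter_upwards with w
  simp [slope_def_field]

/-- the constant `c` -/
noncomputable def cconst (γ : ℝ) : ℂ :=
  (if 1 ≤ γ then Complex.I else 0) - (if γ ≤ 1 then 1 else 0)

lemma cconst_ne_zero (γ : ℝ) : cconst γ ≠ 0 := by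
  unfold cconst
  rcases le_or_gt 1 γ with h1 | h1
  · rcases le_or_gt γ 1 with h2 | h2
    · simp only [if_pos h1, if_pos h2]
      intro h
      have := congrArg Complex.im h
      simp at this
    · simp only [if_pos h1, if_neg (not_le.mpr h2)]
      intro h
      have := congrArg Complex.im h
      simp at this
  · simp only [if_neg (not_le.mpr h1), if_pos h1.le]
    intro h
    have := congrArg Complex.re h
    simp at this

/-- Key pointwise limit. -/
lemma tendsto_key {γ : ℝ} (hγ : 0 < γ) {r : ℝ} (hr : 0 ≤ r) :
    Tendsto (fun t : ℝ =>
        (Complex.exp (Complex.I * ((t * r : ℝ) : ℂ)) *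
          Complex.exp (-((t ^ γ * r : ℝ) : ℂ)) - 1) / ((t ^ (min 1 γ) : ℝ) : ℂ))
      (nhdsWithin 0 (Set.Ioi 0)) (nhds (cconst γ * r)) := by
  rcases eq_or_lt_of_le hr with hr0 | hr0
  · simp only [← hr0]
    norm_num
  set m := min 1 γ with hm
  have hm0 : 0 < m := lt_min one_pos hγ
  have hm1 : m ≤ 1 := min_le_left _ _
  have hmγ : m ≤ γ := min_le_right _ _
  set z : ℝ → ℂ := fun t => Complex.I * ((t * r : ℝ) : ℂ) - ((t ^ γ * r : ℝ) : ℂ) with hz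
  have hz_ne : ∀ t ∈ Set.Ioi (0:ℝ), z t ≠ 0 := by
    intro t ht h0
    have := congrArg Complex.re h0
    simp only [hz, Complex.sub_re, Complex.mul_re, Complex.I_re, Complex.I_im,
      Complex.ofReal_re, Complex.ofReal_im, Complex.zero_re] at this
    have htγ : 0 < t ^ γ := Real.rpow_pos_of_pos ht γ
    nlinarith
  -- z tends to 0
  have hz_tendsto : Tendsto z (nhdsWithin 0 (Set.Ioi 0)) (nhds 0) := by
    have hid : Tendsto (fun t : ℝ => t) (nhdsWithin 0 (Set.Ioi 0)) (nhds 0) :=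
      tendsto_id.mono_left nhdsWithin_le_nhds
    have h1 : Tendsto (fun t : ℝ => t * r) (nhdsWithin 0 (Set.Ioi 0)) (nhds 0) := by
      simpa using hid.mul_const r
    have h2 : Tendsto (fun t : ℝ => t ^ γ * r) (nhdsWithin 0 (Set.Ioi 0)) (nhds 0) := by
      have := (tendsto_rpow_zero_right hγ.le).mul_const r
      simpa [if_neg hγ.ne'] using this
    have h1' : Tendsto (fun t : ℝ => ((t * r : ℝ) : ℂ)) (nhdsWithin 0 (Set.Ioi 0))
        (nhds 0) := by
      have := (Complex.continuous_ofReal.tendsto 0).comp h1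
      simpa only [Function.comp_def, Complex.ofReal_zero] using this
    have h2' : Tendsto (fun t : ℝ => ((t ^ γ * r : ℝ) : ℂ)) (nhdsWithin 0 (Set.Ioi 0))
        (nhds 0) := by
      have := (Complex.continuous_ofReal.tendsto 0).comp h2
      simpa only [Function.comp_def, Complex.ofReal_zero] using this
    have h3 := (h1'.const_mul Complex.I).sub h2'
    rw [show Complex.I * 0 - 0 = (0:ℂ) by ring] at h3
    rw [hz]
    exact h3
  -- first factor
  have hfac1 : Tendsto (fun t : ℝ => (Complex.exp (z t) - 1) / z t)
      (nhdsWithin 0 (Set.Ioi 0)) (nhds 1) := by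
    refine exp_ratio_tendsto.comp ?_
    rw [tendsto_nhdsWithin_iff]
    refine ⟨hz_tendsto, ?_⟩
    filter_upwards [self_mem_nhdsWithin] with t ht
    exact hz_ne t ht
  -- second factor
  have hfac2 : Tendsto (fun t : ℝ => z t / ((t ^ m : ℝ) : ℂ))
      (nhdsWithin 0 (Set.Ioi 0)) (nhds (cconst γ * r)) := by
    have key : ∀ t ∈ Set.Ioi (0:ℝ),
        z t / ((t ^ m : ℝ) : ℂ)
          = Complex.I * r * ((t ^ (1 - m) : ℝ) : ℂ) - r * ((t ^ (γ - m) : ℝ) : ℂ) := by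
      intro t ht
      have htm : (0:ℝ) < t ^ m := Real.rpow_pos_of_pos ht m
      have e1 : (t : ℝ) ^ (1 - m) = t / t ^ m := by
        rw [Real.rpow_sub ht, Real.rpow_one]
      have e2 : (t : ℝ) ^ (γ - m) = t ^ γ / t ^ m := by
        rw [Real.rpow_sub ht]
      rw [e1, e2, hz]
      push_cast
      have htm' : ((t ^ m : ℝ) : ℂ) ≠ 0 := by
        exact_mod_cast htm.ne'
      field_simp
    have L1 : Tendsto (fun t : ℝ => Complex.I * r * ((t ^ (1 - m) : ℝ) : ℂ)
          - r * ((t ^ (γ - m) : ℝ) : ℂ)) (nhdsWithin 0 (Set.Ioi 0))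
        (nhds (Complex.I * r * (if (1:ℝ) - m = 0 then 1 else 0)
          - r * (if γ - m = 0 then 1 else 0))) := by
      have t1 := (Complex.continuous_ofReal.tendsto _).comp
        (tendsto_rpow_zero_right (by linarith : (0:ℝ) ≤ 1 - m))
      have t2 := (Complex.continuous_ofReal.tendsto _).comp
        (tendsto_rpow_zero_right (by linarith : (0:ℝ) ≤ γ - m))
      have := (t1.const_mul (Complex.I * r)).sub (t2.const_mul (r : ℂ))
      simpa [Function.comp, apply_ite Complex.ofReal] using this
    have heq : Complex.I * r * (if (1:ℝ) - m = 0 then 1 else 0)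
        - r * (if γ - m = 0 then 1 else 0) = cconst γ * r := by
      have c1 : ((1:ℝ) - m = 0) ↔ (1 ≤ γ) := by
        rw [sub_eq_zero, eq_comm, hm, min_eq_left_iff]
      have c2 : (γ - m = 0) ↔ (γ ≤ 1) := by
        rw [sub_eq_zero, eq_comm, hm, min_eq_right_iff]
      rw [if_congr c1 rfl rfl, if_congr c2 rfl rfl]
      unfold cconst
      split_ifs <;> ring
    rw [← heq]
    refine L1.congr' ?_
    filter_upwards [self_mem_nhdsWithin] with t ht
    exact (key t ht).symm
  -- combine
  have hmul := hfac1.mul hfac2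
  rw [one_mul] at hmul
  refine hmul.congr' ?_
  filter_upwards [self_mem_nhdsWithin] with t ht
  have h1 : Complex.exp (Complex.I * ((t * r : ℝ) : ℂ)) *
      Complex.exp (-((t ^ γ * r : ℝ) : ℂ)) = Complex.exp (z t) := by
    rw [← Complex.exp_add, hz]
    ring_nf
  rw [h1]
  exact div_mul_div_cancel₀ (hz_ne t ht)

private lemma norm_key_le {γ : ℝ} (hγ : 0 < γ) {t : ℝ} (ht0 : 0 < t) (ht1 : t ≤ 1)
    {r : ℝ} (hr : 0 ≤ r) :
    ‖(Complex.exp (Complex.I * ((t * r : ℝ) : ℂ)) *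
        Complex.exp (-((t ^ γ * r : ℝ) : ℂ)) - 1) / ((t ^ (min 1 γ) : ℝ) : ℂ)‖ ≤ 2 * r := by
  set m := min 1 γ with hm
  have hm1 : m ≤ 1 := min_le_left _ _
  have hmγ : m ≤ γ := min_le_right _ _
  have htm : (0:ℝ) < t ^ m := Real.rpow_pos_of_pos ht0 m
  have htγ : (0:ℝ) < t ^ γ := Real.rpow_pos_of_pos ht0 γ
  set z : ℂ := Complex.I * ((t * r : ℝ) : ℂ) - ((t ^ γ * r : ℝ) : ℂ) with hzdef
  have hcomb : Complex.exp (Complex.I * ((t * r : ℝ) : ℂ)) *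
      Complex.exp (-((t ^ γ * r : ℝ) : ℂ)) = Complex.exp z := by
    rw [← Complex.exp_add, hzdef]
    ring_nf
  have hre : z.re ≤ 0 := by
    simp only [hzdef, Complex.sub_re, Complex.mul_re, Complex.I_re, Complex.I_im,
      Complex.ofReal_re, Complex.ofReal_im]
    nlinarith
  have hnz : ‖z‖ ≤ t * r + t ^ γ * r := by
    calc ‖z‖ ≤ ‖Complex.I * ((t * r : ℝ) : ℂ)‖ + ‖((t ^ γ * r : ℝ) : ℂ)‖ := norm_sub_le _ _
      _ = |t * r| + |t ^ γ * r| := by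
          rw [norm_mul, Complex.norm_I, one_mul, Complex.norm_real, Complex.norm_real,
            Real.norm_eq_abs, Real.norm_eq_abs]
      _ = t * r + t ^ γ * r := by
          rw [_root_.abs_of_nonneg (mul_nonneg ht0.le hr), _root_.abs_of_nonneg (mul_nonneg htγ.le hr)]
  have ht_le : t ≤ t ^ m := by
    conv_lhs => rw [← Real.rpow_one t]
    exact Real.rpow_le_rpow_of_exponent_ge ht0 ht1 hm1
  have htγ_le : t ^ γ ≤ t ^ m := Real.rpow_le_rpow_of_exponent_ge ht0 ht1 hmγ
  have hz2 : ‖z‖ ≤ 2 * (t ^ m) * r := by nlinarith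
  rw [hcomb, norm_div]
  have h1 : ‖Complex.exp z - 1‖ ≤ ‖z‖ := norm_exp_sub_one_le_of_re_nonpos hre
  have h2 : ‖((t ^ m : ℝ) : ℂ)‖ = t ^ m := by
    rw [Complex.norm_real, Real.norm_eq_abs, abs_of_pos htm]
  rw [h2, div_le_iff₀ htm]
  nlinarith

private lemma inversion (f : SchwartzMap ℝ ℂ) (x : ℝ) :
    f x = (1 / (2 * (Real.pi : ℂ))) *
      ∫ ξ : ℝ, fhat (⇑f) ξ * Complex.exp (Complex.I * (x : ℂ) * (ξ : ℂ)) := by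
  have hπ : (0:ℝ) < 2 * Real.pi := by positivity
  have hπℂ : ((2 * Real.pi : ℝ) : ℂ) ≠ 0 := by exact_mod_cast hπ.ne'
  have hf_int : Integrable (⇑f) := f.integrable
  have hF_int : Integrable (𝓕 ⇑f) := by
    exact (SchwartzMap.fourierTransformCLM ℂ f).integrable
  have hinv := hf_int.fourierInv_fourier_eq hF_int (f.continuous.continuousAt (x := x))
  rw [← hinv, Real.fourierInv_eq_fourier_neg,
    Real.fourier_real_eq_integral_exp_smul]
  set G : ℝ → ℂ := fun ξ => fhat (⇑f) ξ * Complex.exp (Complex.I * (x : ℂ) * (ξ : ℂ)) with hG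
  have hsub := MeasureTheory.Measure.integral_comp_mul_left G (2 * Real.pi)
  have h2 : ∫ ξ : ℝ, G ξ = (2 * Real.pi : ℝ) • ∫ v : ℝ, G (2 * Real.pi * v) := by
    rw [hsub, abs_of_pos (inv_pos.mpr hπ), smul_smul, mul_inv_cancel₀ hπ.ne', one_smul]
  have h3 : ∀ v : ℝ, G (2 * Real.pi * v)
      = Complex.exp (((-2 * Real.pi * v * (-x) : ℝ) : ℂ) * Complex.I) • 𝓕 (⇑f) v := by
    intro v
    rw [hG]
    simp only [smul_eq_mul]
    rw [fhat_eq]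
    have hv : 2 * Real.pi * v / (2 * Real.pi) = v := by field_simp
    rw [hv, mul_comm]
    congr 1
    congr 1
    push_cast
    ring
  rw [h2]
  rw [show ∀ z : ℂ, (2 * Real.pi : ℝ) • z = ((2 * Real.pi : ℝ) : ℂ) * z from
    fun z => by rw [Complex.real_smul]]
  rw [← mul_assoc]
  rw [show (1 / (2 * (Real.pi : ℂ))) * ((2 * Real.pi : ℝ) : ℂ) = 1 by
    push_cast
    push_cast at hπℂ
    field_simp]
  rw [one_mul]
  exact integral_congr_ae (Filter.Eventually.of_forall fun v => (h3 v).symm) |>.symm ▸ rfl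

/-- If `f` is Schwartz and `(P_{a,γ}^t f(x) - f(x))/t^{min{1,γ}} → 0` as
`t → 0⁺` for a.e. `x`, then `f ≡ 0`. -/
theorem schwartz_rate_rigidity (a γ : ℝ) (ha : 0 < a) (hγ : 0 < γ)
    (f : SchwartzMap ℝ ℂ)
    (h : ∀ᵐ x : ℝ, Tendsto
        (fun t : ℝ => (landau a γ (⇑f) t x - f x) / ((t ^ (min 1 γ) : ℝ) : ℂ))
        (nhdsWithin 0 (Set.Ioi 0)) (nhds 0)) :
    ∀ x : ℝ, f x = 0 := by
  have hπ : (0:ℝ) < 2 * Real.pi := by positivity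
  have hπℂ : (2 * (Real.pi : ℂ)) ≠ 0 := by
    intro hc
    have := congrArg Complex.re hc
    simp at this
  set F : SchwartzMap ℝ ℂ := SchwartzMap.fourierTransformCLM ℂ f with hFdef
  have hFco : ⇑F = 𝓕 ⇑f := rfl
  have hgdef : ∀ ξ : ℝ, fhat (⇑f) ξ = F (ξ / (2 * Real.pi)) := by
    intro ξ
    rw [fhat_eq, ← hFco]
  have habsa : Continuous (fun ξ : ℝ => |ξ| ^ a) :=
    (Real.continuous_rpow_const ha.le).comp _root_.continuous_abs
  have hg_cont : Continuous (fun ξ : ℝ => fhat (⇑f) ξ) := by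
    simp only [hgdef]
    exact F.continuous.comp (continuous_id.div_const _)
  have hg_int : Integrable (fun ξ : ℝ => fhat (⇑f) ξ) := by
    simp only [hgdef]
    exact F.integrable.comp_div hπ.ne'
  have hra : Integrable (fun ξ : ℝ => |ξ| ^ a * ‖fhat (⇑f) ξ‖) := by
    have base := integrable_rpow_norm F ha
    have hcomp := base.comp_div hπ.ne'
    have h2 := hcomp.const_mul ((2 * Real.pi) ^ a)
    refine h2.congr ?_
    filter_upwards with ξ
    rw [hgdef]
    have habs : |ξ / (2 * Real.pi)| = |ξ| / (2 * Real.pi) := by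
      rw [abs_div, _root_.abs_of_pos hπ]
    rw [habs, Real.div_rpow (abs_nonneg _) hπ.le]
    have hpa : (0:ℝ) < (2 * Real.pi) ^ a := Real.rpow_pos_of_pos hπ a
    field_simp
  have hexp1 : ∀ x ξ : ℝ, ‖Complex.exp (Complex.I * (x:ℂ) * (ξ:ℂ))‖ = 1 := by
    intro x ξ
    rw [Complex.norm_exp]
    have hre0 : (Complex.I * (x:ℂ) * (ξ:ℂ)).re = 0 := by simp
    rw [hre0, Real.exp_zero]
  have hecont : ∀ x : ℝ, Continuous (fun ξ : ℝ =>
      Complex.exp (Complex.I * (x:ℂ) * (ξ:ℂ))) := fun x =>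
    Complex.continuous_exp.comp (continuous_const.mul Complex.continuous_ofReal)
  set Φ : ℝ → ℂ := fun x => ∫ ξ : ℝ, fhat (⇑f) ξ *
      Complex.exp (Complex.I * (x:ℂ) * (ξ:ℂ)) * ((|ξ| ^ a : ℝ) : ℂ) with hΦdef
  have main : ∀ x : ℝ, Tendsto
      (fun t : ℝ => (landau a γ (⇑f) t x - f x) / ((t ^ (min 1 γ) : ℝ) : ℂ))
      (nhdsWithin 0 (Set.Ioi 0))
      (nhds ((1 / (2 * (Real.pi : ℂ))) * (cconst γ * Φ x))) := by
    intro x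
    have hDCT : Tendsto (fun t : ℝ => ∫ ξ : ℝ, fhat (⇑f) ξ *
          Complex.exp (Complex.I * (x:ℂ) * (ξ:ℂ)) *
          ((Complex.exp (Complex.I * ((t * |ξ| ^ a : ℝ) : ℂ)) *
            Complex.exp (-((t ^ γ * |ξ| ^ a : ℝ) : ℂ)) - 1) / ((t ^ (min 1 γ) : ℝ) : ℂ)))
        (nhdsWithin 0 (Set.Ioi 0))
        (nhds (∫ ξ : ℝ, fhat (⇑f) ξ * Complex.exp (Complex.I * (x:ℂ) * (ξ:ℂ)) *
          (cconst γ * ((|ξ| ^ a : ℝ) : ℂ)))) := by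
      apply tendsto_integral_filter_of_dominated_convergence
        (fun ξ : ℝ => 2 * (|ξ| ^ a * ‖fhat (⇑f) ξ‖))
      · filter_upwards with t
        apply Continuous.aestronglyMeasurable
        have hc1 : Continuous (fun ξ : ℝ =>
            Complex.exp (Complex.I * ((t * |ξ| ^ a : ℝ) : ℂ))) :=
          Complex.continuous_exp.comp (continuous_const.mul
            (Complex.continuous_ofReal.comp (continuous_const.mul habsa)))
        have hc2 : Continuous (fun ξ : ℝ =>
            Complex.exp (-((t ^ γ * |ξ| ^ a : ℝ) : ℂ))) :=
          Complex.continuous_exp.comp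
            ((Complex.continuous_ofReal.comp (continuous_const.mul habsa)).neg)
        exact (hg_cont.mul (hecont x)).mul
          (((hc1.mul hc2).sub continuous_const).div_const _)
      · filter_upwards [Ioc_mem_nhdsGT zero_lt_one] with t ht
        filter_upwards with ξ
        rw [norm_mul, norm_mul, hexp1, mul_one]
        have hkey := norm_key_le (γ := γ) hγ ht.1 ht.2
          (Real.rpow_nonneg (abs_nonneg ξ) a)
        calc ‖fhat (⇑f) ξ‖ * ‖(Complex.exp (Complex.I * ((t * |ξ| ^ a : ℝ) : ℂ)) *
              Complex.exp (-((t ^ γ * |ξ| ^ a : ℝ) : ℂ)) - 1) /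
                ((t ^ (min 1 γ) : ℝ) : ℂ)‖
            ≤ ‖fhat (⇑f) ξ‖ * (2 * |ξ| ^ a) :=
              mul_le_mul_of_nonneg_left hkey (norm_nonneg _)
          _ = 2 * (|ξ| ^ a * ‖fhat (⇑f) ξ‖) := by ring
      · exact hra.const_mul 2
      · filter_upwards with ξ
        exact (tendsto_key hγ (Real.rpow_nonneg (abs_nonneg ξ) a)).const_mul
          (fhat (⇑f) ξ * Complex.exp (Complex.I * (x:ℂ) * (ξ:ℂ)))
    have hpull : (∫ ξ : ℝ, fhat (⇑f) ξ * Complex.exp (Complex.I * (x:ℂ) * (ξ:ℂ)) *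
        (cconst γ * ((|ξ| ^ a : ℝ) : ℂ))) = cconst γ * Φ x := by
      have hβ : Φ x = ∫ ξ : ℝ, fhat (⇑f) ξ *
          Complex.exp (Complex.I * (x:ℂ) * (ξ:ℂ)) * ((|ξ| ^ a : ℝ) : ℂ) := rfl
      rw [hβ, ← integral_const_mul]
      exact integral_congr_ae (Filter.Eventually.of_forall fun ξ => by ring)
    have hev : (fun t : ℝ => (landau a γ (⇑f) t x - f x) / ((t ^ (min 1 γ) : ℝ) : ℂ))
        =ᶠ[nhdsWithin 0 (Set.Ioi 0)]
        (fun t : ℝ => (1 / (2 * (Real.pi : ℂ))) * ∫ ξ : ℝ, fhat (⇑f) ξ *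
          Complex.exp (Complex.I * (x:ℂ) * (ξ:ℂ)) *
          ((Complex.exp (Complex.I * ((t * |ξ| ^ a : ℝ) : ℂ)) *
            Complex.exp (-((t ^ γ * |ξ| ^ a : ℝ) : ℂ)) - 1) /
              ((t ^ (min 1 γ) : ℝ) : ℂ))) := by
      filter_upwards [self_mem_nhdsWithin] with t ht
      have ht0 : (0:ℝ) < t := ht
      have hc1 : Continuous (fun ξ : ℝ =>
          Complex.exp (Complex.I * ((t * |ξ| ^ a : ℝ) : ℂ))) :=
        Complex.continuous_exp.comp (continuous_const.mul
          (Complex.continuous_ofReal.comp (continuous_const.mul habsa)))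
      have hc2 : Continuous (fun ξ : ℝ =>
          Complex.exp (-((t ^ γ * |ξ| ^ a : ℝ) : ℂ))) :=
        Complex.continuous_exp.comp
          ((Complex.continuous_ofReal.comp (continuous_const.mul habsa)).neg)
      have hint1 : Integrable (fun ξ : ℝ => fhat (⇑f) ξ *
          Complex.exp (Complex.I * (x:ℂ) * (ξ:ℂ)) *
          Complex.exp (Complex.I * ((t * |ξ| ^ a : ℝ) : ℂ)) *
          Complex.exp (-((t ^ γ * |ξ| ^ a : ℝ) : ℂ))) := by
        refine hg_int.mono ?_ ?_
        · exact (((hg_cont.mul (hecont x)).mul hc1).mul hc2).aestronglyMeasurable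
        · filter_upwards with ξ
          rw [norm_mul, norm_mul, norm_mul, hexp1, mul_one]
          have he2 : ‖Complex.exp (Complex.I * ((t * |ξ| ^ a : ℝ) : ℂ))‖ = 1 := by
            rw [Complex.norm_exp]
            have : (Complex.I * ((t * |ξ| ^ a : ℝ) : ℂ)).re = 0 := by simp
            rw [this, Real.exp_zero]
          have he3 : ‖Complex.exp (-((t ^ γ * |ξ| ^ a : ℝ) : ℂ))‖ ≤ 1 := by
            rw [Complex.norm_exp]
            rw [Real.exp_le_one_iff]
            have : (0:ℝ) ≤ t ^ γ * |ξ| ^ a :=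
              mul_nonneg (Real.rpow_pos_of_pos ht0 γ).le
                (Real.rpow_nonneg (abs_nonneg ξ) a)
            simp [this]
          rw [he2, mul_one]
          calc ‖fhat (⇑f) ξ‖ * ‖Complex.exp (-((t ^ γ * |ξ| ^ a : ℝ) : ℂ))‖
              ≤ ‖fhat (⇑f) ξ‖ * 1 := mul_le_mul_of_nonneg_left he3 (norm_nonneg _)
            _ = ‖fhat (⇑f) ξ‖ := mul_one _
      have hint2 : Integrable (fun ξ : ℝ => fhat (⇑f) ξ *
          Complex.exp (Complex.I * (x:ℂ) * (ξ:ℂ))) := by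
        refine hg_int.mono ((hg_cont.mul (hecont x)).aestronglyMeasurable) ?_
        filter_upwards with ξ
        rw [norm_mul, hexp1, mul_one]
      simp only [landau]
      rw [inversion f x, ← mul_sub, ← integral_sub hint1 hint2, mul_div_assoc,
        ← integral_div]
      congr 1
      refine integral_congr_ae (Filter.Eventually.of_forall fun ξ => ?_)
      ring
    have hlim := hDCT.const_mul ((1:ℂ) / (2 * (Real.pi : ℂ)))
    rw [hpull] at hlim
    exact Filter.Tendsto.congr' hev.symm hlim
  -- a.e. vanishing of Φ
  have hae0 : ∀ᵐ x : ℝ, (1 / (2 * (Real.pi : ℂ))) * (cconst γ * Φ x) = 0 := by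
    filter_upwards [h] with x hx
    exact tendsto_nhds_unique (main x) hx
  have hΦae : Φ =ᵐ[(volume : Measure ℝ)] 0 := by
    filter_upwards [hae0] with x hx
    have h1 : (1 / (2 * (Real.pi : ℂ))) ≠ 0 := one_div_ne_zero hπℂ
    rcases mul_eq_zero.mp hx with h' | h'
    · exact absurd h' h1
    rcases mul_eq_zero.mp h' with h'' | h''
    · exact absurd h'' (cconst_ne_zero γ)
    · exact h''
  set H : ℝ → ℂ := fun ξ => fhat (⇑f) ξ * ((|ξ| ^ a : ℝ) : ℂ) with hHdef
  have hH_cont : Continuous H := hg_cont.mul (Complex.continuous_ofReal.comp habsa)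
  have hH_int : Integrable H := by
    refine Integrable.mono hra hH_cont.aestronglyMeasurable ?_
    filter_upwards with ξ
    have hr0 : (0:ℝ) ≤ |ξ| ^ a := Real.rpow_nonneg (abs_nonneg ξ) a
    rw [show H ξ = fhat (⇑f) ξ * ((|ξ| ^ a : ℝ) : ℂ) from rfl, norm_mul,
      Complex.norm_real, Real.norm_eq_abs, _root_.abs_of_nonneg hr0,
      Real.norm_eq_abs, _root_.abs_of_nonneg (mul_nonneg hr0 (norm_nonneg _))]
    exact le_of_eq (mul_comm _ _)
  have hΦeq : ∀ x : ℝ, Φ x = 𝓕 H (-(x / (2 * Real.pi))) := by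
    intro x
    rw [Real.fourier_real_eq_integral_exp_smul]
    refine integral_congr_ae (Filter.Eventually.of_forall fun v => ?_)
    simp only [smul_eq_mul]
    rw [show (-2 * Real.pi * v * (-(x / (2 * Real.pi))) : ℝ) = x * v from by
      field_simp]
    show fhat (⇑f) v * Complex.exp (Complex.I * (x:ℂ) * (v:ℂ)) * ((|v| ^ a : ℝ) : ℂ)
      = Complex.exp (((x * v : ℝ) : ℂ) * Complex.I) * (fhat (⇑f) v * ((|v| ^ a : ℝ) : ℂ))
    have : Complex.I * (x:ℂ) * (v:ℂ) = ((x * v : ℝ) : ℂ) * Complex.I := by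
      push_cast; ring
    rw [this]
    ring
  have hΦcont : Continuous Φ := by
    have hFH : Continuous (𝓕 H) :=
      VectorFourier.fourierIntegral_continuous Real.continuous_fourierChar
        (by exact continuous_inner) hH_int
    rw [show Φ = fun x => 𝓕 H (-(x / (2 * Real.pi))) from funext hΦeq]
    exact hFH.comp ((continuous_id.div_const _).neg)
  have hΦ0 : Φ = 0 := (Continuous.ae_eq_iff_eq volume hΦcont continuous_const).mp hΦae
  have h𝓕H : 𝓕 H = 0 := by
    funext w
    have hx := hΦeq (-(2 * Real.pi * w))
    rw [hΦ0] at hx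
    rw [show -(-(2 * Real.pi * w) / (2 * Real.pi)) = w from by field_simp] at hx
    simpa using hx.symm
  have hH0 : ∀ ξ : ℝ, H ξ = 0 := by
    intro ξ
    have hinv := hH_int.fourierInv_fourier_eq
      (by rw [h𝓕H]; exact integrable_zero _ _ _) (hH_cont.continuousAt (x := ξ))
    rw [h𝓕H] at hinv
    rw [← hinv, Real.fourierInv_eq]
    simp
  have hg0 : ∀ ξ : ℝ, ξ ≠ 0 → fhat (⇑f) ξ = 0 := by
    intro ξ hξ
    have hrp : (0:ℝ) < |ξ| ^ a := Real.rpow_pos_of_pos (abs_pos.mpr hξ) a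
    have hr : ((|ξ| ^ a : ℝ) : ℂ) ≠ 0 := by exact_mod_cast hrp.ne'
    have hz := hH0 ξ
    rw [show H ξ = fhat (⇑f) ξ * ((|ξ| ^ a : ℝ) : ℂ) from rfl] at hz
    exact (mul_eq_zero.mp hz).resolve_right hr
  have h𝓕f : 𝓕 (⇑f) = 0 := by
    have hae : (𝓕 ⇑f) =ᵐ[(volume : Measure ℝ)] 0 := by
      rw [Filter.eventuallyEq_iff_exists_mem]
      refine ⟨{(0:ℝ)}ᶜ, ?_, ?_⟩
      · rw [mem_ae_iff, compl_compl]
        exact measure_singleton 0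
      · intro w hw
        have hw0 : w ≠ 0 := hw
        have h2w : (2 * Real.pi * w) ≠ 0 := mul_ne_zero hπ.ne' hw0
        have hz := hg0 (2 * Real.pi * w) h2w
        rw [hgdef, show 2 * Real.pi * w / (2 * Real.pi) = w from by field_simp] at hz
        show (𝓕 ⇑f) w = 0
        rw [← hFco]
        exact hz
    exact (Continuous.ae_eq_iff_eq volume (hFco ▸ F.continuous) continuous_const).mp hae
  intro x
  have hinv := f.integrable.fourierInv_fourier_eq
    (by rw [h𝓕f]; exact integrable_zero _ _ _) (f.continuous.continuousAt (x := x))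
  rw [h𝓕f] at hinv
  rw [← hinv, Real.fourierInv_eq]
  simp
end
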